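/- Let k be an algebraically closed field of characteristic zero and let b ∈ k with b ≠ 0 and b ≠ 1728. Then the polynomial f_b(X) = (6912 - X)^3 - 27·b·X^2 has exactly three distinct roots in k, and none of these roots is equal to 0, 6912, 1728, or -13824. -/

import Mathlib

open Polynomial

/-- Let `k` be an algebraically closed field of characteristic zero and
`b ∈ k` with `b ≠ 0` and `b ≠ 1728`. Then `f_b(X) = (6912 - X)^3 - 27·b·X^2` has exactly
three distinct roots in `k`, and none of these roots equals `0`, `6912`, `1728`, or `-13824`. -/
theorem three_distinct_roots (k : Type*) [Field k] [IsAlgClosed k] [CharZero k]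
    [DecidableEq k] (b : k)
    (hb0 : b ≠ 0) (hb1 : b ≠ 1728) :
    ((C 6912 - X) ^ 3 - C (27 * b) * X ^ 2 : k[X]).roots.toFinset.card = 3 ∧
      ∀ x : k, ((C 6912 - X) ^ 3 - C (27 * b) * X ^ 2 : k[X]).IsRoot x →
        x ≠ 0 ∧ x ≠ 6912 ∧ x ≠ 1728 ∧ x ≠ -13824 := by
  set f : k[X] := (C 6912 - X) ^ 3 - C (27 * b) * X ^ 2 with hf
  have heval : ∀ x : k, f.eval x = (6912 - x) ^ 3 - 27 * b * x ^ 2 := by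
    intro x; simp [hf]
  have hdeg : f.natDegree = 3 := by
    rw [hf]
    compute_degree!
  have hne : f ≠ 0 := by
    intro h
    rw [h] at hdeg
    simp at hdeg
  -- separability
  have hsep : f.Separable := by
    rw [Separable, Polynomial.isCoprime_iff_aeval_ne_zero_of_isAlgClosed k k]
    intro x
    by_contra h
    push_neg at h
    obtain ⟨h1, h2⟩ := h
    simp only [aeval_def, eval₂_eq_eval_map, Algebra.algebraMap_self, Polynomial.map_id]
      at h1 h2
    rw [heval] at h1
    rw [hf] at h2
    simp only [derivative_sub, derivative_pow, derivative_mul, derivative_C, derivative_X,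
      zero_mul, zero_add, mul_one, eval_sub, eval_mul, eval_pow, eval_C, eval_X,
      eval_natCast, eval_ofNat, Nat.cast_ofNat, zero_sub, eval_neg, eval_one] at h2
    have key : 27 * b * x * (x + 13824) = 0 := by
      linear_combination -3 * h1 - (6912 - x) * h2
    have h27 : (27 : k) ≠ 0 := by norm_num
    rcases mul_eq_zero.mp key with h | h
    · rcases mul_eq_zero.mp h with h | h
      · rcases mul_eq_zero.mp h with h | h
        · exact h27 h
        · exact hb0 h
      · -- x = 0
        subst h
        norm_num at h2
    · -- x = -13824
      have hx : x = -13824 := by linear_combination h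
      subst hx
      apply hb1
      linear_combination h2 / 746496
  have hnodup : f.roots.Nodup := nodup_roots hsep
  have hsplits : f.Splits := IsAlgClosed.splits f
  have hcard : f.roots.card = 3 := by
    rw [(Polynomial.splits_iff_card_roots).mp hsplits, hdeg]
  refine ⟨by rw [Multiset.toFinset_card_of_nodup hnodup, hcard], ?_⟩
  intro x hx
  have h1 : (6912 - x) ^ 3 - 27 * b * x ^ 2 = 0 := by
    rw [← heval]; exact hx
  refine ⟨?_, ?_, ?_, ?_⟩ <;> rintro rfl
  · norm_num at h1
  · exact hb0 (by linear_combination -h1 / 1289945088)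
  · apply hb1
    linear_combination -h1 / 80621568
  · apply hb1
    linear_combination -h1 / 5159780352
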